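/- Let β_i be a given smooth vector field on ℝ × ℝ³, and let A_ij (symmetric-matrix-valued) and κ (scalar) be smooth fields on ℝ × ℝ³ satisfying the wave equations ∂_t∂_t A_ij = ΔA_ij and ∂_t∂_t κ = Δκ everywhere. Let γ̃⁰_ij, Γ⁰_i, α⁰, φ⁰ be smooth fields on ℝ³ and assume the initial time-derivatives satisfy, for all x ∈ ℝ³: ∂_t A_ij(0,x) = −(1/2)Δγ̃⁰_ij + (1/2)(∂_i Γ⁰_j + ∂_j Γ⁰_i) − 2∂_i∂_j φ⁰ − 2δ_ij Δφ⁰ − ∂_i∂_j α⁰ + (1/3)δ_ij Δα⁰, and ∂_t κ(0,x) = −Δα⁰(x). Define φ(t,x) = φ⁰(x) + ∫₀ᵗ [−(1/6)κ + (1/6)∂_l β_l](s,x) ds; α(t,x) = α⁰(x) − ∫₀ᵗ κ(s,x) ds; γ̃_ij(t,x) = γ̃⁰_ij(x) + ∫₀ᵗ [−2A_ij + ∂_i β_j + ∂_j β_i − (2/3)δ_ij ∂_l β_l](s,x) ds; Γ_i(t,x) = Γ⁰_i(x) + ∫₀ᵗ [−(4/3)∂_i κ + (1/3)∂_i(∂_p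 β_p) + Δβ_i](s,x) ds. Then the fields (φ, α, κ, γ̃_ij, A_ij, Γ_i) satisfy the full linearized BSSN system (E1)–(E6) at every point of ℝ × ℝ³. -/

import Mathlib

noncomputable section

/-- Spacetime ℝ × ℝ³. -/
abbrev Spc : Type := ℝ × (Fin 3 → ℝ)

/-- Time derivative ∂_t. -/
noncomputable def pt (f : Spc → ℝ) : Spc → ℝ :=
  fun p => deriv (fun s => f (s, p.2)) p.1

/-- Spatial partial derivative ∂_i. -/
noncomputable def ps (i : Fin 3) (f : Spc → ℝ) : Spc → ℝ :=
  fun p => deriv (fun s => f (p.1, Function.update p.2 i s)) (p.2 i)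

/-- Spatial Laplacian Δ = Σ_i ∂_i ∂_i. -/
noncomputable def lap (f : Spc → ℝ) : Spc → ℝ :=
  fun p => ∑ i : Fin 3, ps i (ps i f) p

/-- Kronecker delta δ_ij. -/
noncomputable def kron (i j : Fin 3) : ℝ := if i = j then 1 else 0

/-- Spatial partial derivative ∂_i on ℝ³ (for initial-data fields). -/
noncomputable def d (i : Fin 3) (f : (Fin 3 → ℝ) → ℝ) : (Fin 3 → ℝ) → ℝ :=
  fun x => deriv (fun s => f (Function.update x i s)) (x i)

/-- Spatial Laplacian on ℝ³ (for initial-data fields). -/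
noncomputable def lapS (f : (Fin 3 → ℝ) → ℝ) : (Fin 3 → ℝ) → ℝ :=
  fun x => ∑ i : Fin 3, d i (d i f) x

namespace BSSNaux

notation "Sm" => ContDiff ℝ (⊤:ℕ∞)

lemma le1 : ((⊤:ℕ∞) : WithTop ℕ∞) ≠ 0 := by simp
lemma leD : ((⊤:ℕ∞) : WithTop ℕ∞) + 1 ≤ ((⊤:ℕ∞) : WithTop ℕ∞) := by exact_mod_cast le_top

def e (i : Fin 3) : Spc := (0, Pi.single i 1)

lemma curve_hasDerivAt (t : ℝ) (x : Fin 3 → ℝ) (i : Fin 3) (u : ℝ) :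
    HasDerivAt (fun s => ((t, Function.update x i s) : Spc)) (e i) u :=
  (hasDerivAt_const u t).prodMk (hasDerivAt_update x i u)

lemma hasDerivAt_slice_s {f : Spc → ℝ} (hf : Sm f) (t : ℝ) (x : Fin 3 → ℝ)
    (i : Fin 3) (u : ℝ) :
    HasDerivAt (fun s => f (t, Function.update x i s))
      (fderiv ℝ f (t, Function.update x i u) (e i)) u := by
  have h := ((hf.differentiable le1) (t, Function.update x i u)).hasFDerivAt.comp_hasDerivAt u
    (curve_hasDerivAt t x i u)
  simpa [Function.comp_def] using h

lemma ps_eq_fderiv {f : Spc → ℝ} (hf : Sm f) (p : Spc) (i : Fin 3) :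
    ps i f p = fderiv ℝ f p (e i) := by
  have h := hasDerivAt_slice_s hf p.1 p.2 i (p.2 i)
  rw [Function.update_eq_self] at h
  exact h.deriv

lemma hasDerivAt_ps {f : Spc → ℝ} (hf : Sm f) (p : Spc) (i : Fin 3) :
    HasDerivAt (fun s => f (p.1, Function.update p.2 i s)) (ps i f p) (p.2 i) := by
  rw [ps_eq_fderiv hf p i]
  have h := hasDerivAt_slice_s hf p.1 p.2 i (p.2 i)
  rwa [Function.update_eq_self] at h

lemma hasDerivAt_slice_t {f : Spc → ℝ} (hf : Sm f) (p : Spc) :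
    HasDerivAt (fun s => f (s, p.2)) (fderiv ℝ f p ((1:ℝ), (0 : Fin 3 → ℝ))) p.1 := by
  have := ((hf.differentiable le1) (p.1, p.2)).hasFDerivAt.comp_hasDerivAt p.1
    ((hasDerivAt_id p.1).prodMk (hasDerivAt_const p.1 p.2))
  simpa [Function.comp_def] using this

lemma pt_eq_fderiv {f : Spc → ℝ} (hf : Sm f) (p : Spc) :
    pt f p = fderiv ℝ f p ((1:ℝ), (0 : Fin 3 → ℝ)) :=
  (hasDerivAt_slice_t hf p).deriv

lemma hasDerivAt_pt {f : Spc → ℝ} (hf : Sm f) (p : Spc) :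
    HasDerivAt (fun s => f (s, p.2)) (pt f p) p.1 := by
  rw [pt_eq_fderiv hf p]; exact hasDerivAt_slice_t hf p

lemma contDiff_ps {f : Spc → ℝ} (hf : Sm f) (i : Fin 3) : Sm (ps i f) := by
  have : ps i f = fun p => fderiv ℝ f p (e i) := funext fun p => ps_eq_fderiv hf p i
  rw [this]
  exact (hf.fderiv_right leD).clm_apply contDiff_const

lemma contDiff_pt {f : Spc → ℝ} (hf : Sm f) : Sm (pt f) := by
  have : pt f = fun p => fderiv ℝ f p ((1:ℝ), (0 : Fin 3 → ℝ)) :=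
    funext fun p => pt_eq_fderiv hf p
  rw [this]
  exact (hf.fderiv_right leD).clm_apply contDiff_const

lemma hasDerivAt_slice_d {c : (Fin 3 → ℝ) → ℝ} (hc : Sm c) (x : Fin 3 → ℝ) (i : Fin 3) :
    HasDerivAt (fun s => c (Function.update x i s)) (fderiv ℝ c x (Pi.single i 1)) (x i) := by
  have := ((hc.differentiable le1) (Function.update x i (x i))).hasFDerivAt.comp_hasDerivAt (x i)
    (hasDerivAt_update x i (x i))
  rw [Function.update_eq_self] at this
  simpa [Function.comp_def] using this

lemma d_eq_fderiv {c : (Fin 3 → ℝ) → ℝ} (hc : Sm c) (x : Fin 3 → ℝ) (i : Fin 3) :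
    d i c x = fderiv ℝ c x (Pi.single i 1) :=
  (hasDerivAt_slice_d hc x i).deriv

lemma hasDerivAt_d {c : (Fin 3 → ℝ) → ℝ} (hc : Sm c) (x : Fin 3 → ℝ) (i : Fin 3) :
    HasDerivAt (fun s => c (Function.update x i s)) (d i c x) (x i) := by
  rw [d_eq_fderiv hc x i]; exact hasDerivAt_slice_d hc x i

lemma contDiff_d {c : (Fin 3 → ℝ) → ℝ} (hc : Sm c) (i : Fin 3) : Sm (d i c) := by
  have : d i c = fun x => fderiv ℝ c x (Pi.single i 1) := funext fun x => d_eq_fderiv hc x i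
  rw [this]
  exact (hc.fderiv_right leD).clm_apply contDiff_const

end BSSNaux

namespace BSSNaux

variable {f g : Spc → ℝ}

lemma ps_add (hf : Sm f) (hg : Sm g) (i : Fin 3) :
    ps i (fun q => f q + g q) = fun q => ps i f q + ps i g q :=
  funext fun p => ((hasDerivAt_ps hf p i).add (hasDerivAt_ps hg p i)).deriv

lemma ps_cmul (a : ℝ) (hf : Sm f) (i : Fin 3) :
    ps i (fun q => a * f q) = fun q => a * ps i f q :=
  funext fun p => ((hasDerivAt_ps hf p i).const_mul a).deriv

lemma ps_neg (hf : Sm f) (i : Fin 3) :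
    ps i (fun q => -f q) = fun q => -ps i f q :=
  funext fun p => ((hasDerivAt_ps hf p i).neg).deriv

lemma ps_sub (hf : Sm f) (hg : Sm g) (i : Fin 3) :
    ps i (fun q => f q - g q) = fun q => ps i f q - ps i g q :=
  funext fun p => ((hasDerivAt_ps hf p i).sub (hasDerivAt_ps hg p i)).deriv

lemma ps_sum {ι : Type*} (s : Finset ι) (F : ι → Spc → ℝ) (hF : ∀ l, Sm (F l)) (i : Fin 3) :
    ps i (fun q => ∑ l ∈ s, F l q) = fun q => ∑ l ∈ s, ps i (F l) q :=
  funext fun p => (HasDerivAt.fun_sum fun l _ => hasDerivAt_ps (hF l) p i).deriv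

lemma sm_add (hf : Sm f) (hg : Sm g) : Sm (fun q => f q + g q) := hf.add hg
lemma sm_cmul (a : ℝ) (hf : Sm f) : Sm (fun q => a * f q) := contDiff_const.mul hf
lemma sm_sum {ι : Type*} (s : Finset ι) (F : ι → Spc → ℝ) (hF : ∀ l, Sm (F l)) :
    Sm (fun q => ∑ l ∈ s, F l q) := ContDiff.sum fun l _ => hF l

/-- Clairaut. -/
lemma ps_comm (hf : Sm f) (i j : Fin 3) (p : Spc) :
    ps i (ps j f) p = ps j (ps i f) p := by
  have hdf : Sm (fderiv ℝ f) := hf.fderiv_right leD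
  have key : ∀ a b : Fin 3, ps a (ps b f) p = fderiv ℝ (fderiv ℝ f) p (e a) (e b) := by
    intro a b
    rw [ps_eq_fderiv (contDiff_ps hf b) p a]
    have hb : ps b f = fun q => (ContinuousLinearMap.apply ℝ ℝ (e b)) (fderiv ℝ f q) :=
      funext fun q => ps_eq_fderiv hf q b
    rw [hb]
    have h2 : HasFDerivAt (fun q => (ContinuousLinearMap.apply ℝ ℝ (e b)) (fderiv ℝ f q))
        ((ContinuousLinearMap.apply ℝ ℝ (e b)).comp (fderiv ℝ (fderiv ℝ f) p)) p :=
      (ContinuousLinearMap.apply ℝ ℝ (e b)).hasFDerivAt.comp p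
        ((hdf.differentiable le1) p).hasFDerivAt
    rw [h2.fderiv]
    rfl
  rw [key i j, key j i]
  exact second_derivative_symmetric (f := f) (fun y => ((hf.differentiable le1) y).hasFDerivAt)
    ((hdf.differentiable le1) p).hasFDerivAt (e i) (e j)

lemma lap_unfold (h : Spc → ℝ) : lap h = fun p => ∑ a : Fin 3, ps a (ps a h) p := rfl

lemma ps_lap_comm (hf : Sm f) (i : Fin 3) (p : Spc) :
    lap (ps i f) p = ps i (lap f) p := by
  have h1 : ∀ a : Fin 3, ps a (ps a (ps i f)) p = ps i (ps a (ps a f)) p := by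
    intro a
    have e1 : ps a (ps i f) = ps i (ps a f) := funext fun q => ps_comm hf a i q
    rw [e1]
    exact ps_comm (contDiff_ps hf a) a i p
  have e2 : lap f = fun q => ∑ a : Fin 3, ps a (ps a (f)) q := rfl
  rw [lap_unfold, e2, ps_sum _ _ (fun a => contDiff_ps (contDiff_ps hf a) a) i]
  exact Finset.sum_congr rfl fun a _ => h1 a

lemma lap_add (hf : Sm f) (hg : Sm g) :
    lap (fun q => f q + g q) = fun q => lap f q + lap g q := by
  funext p
  simp only [lap_unfold]
  simp only [ps_add hf hg]
  have : ∀ a : Fin 3, ps a (fun q => ps a f q + ps a g q) p = ps a (ps a f) p + ps a (ps a g) p := by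
    intro a
    have := congrFun (ps_add (contDiff_ps hf a) (contDiff_ps hg a) a) p
    simpa using this
  simp only [this]
  exact Finset.sum_add_distrib

lemma lap_cmul (a : ℝ) (hf : Sm f) :
    lap (fun q => a * f q) = fun q => a * lap f q := by
  funext p
  simp only [lap_unfold]
  simp only [ps_cmul a hf]
  have : ∀ b : Fin 3, ps b (fun q => a * ps b f q) p = a * ps b (ps b f) p := by
    intro b
    have := congrFun (ps_cmul a (contDiff_ps hf b) b) p
    simpa using this
  simp only [this]
  exact (Finset.mul_sum _ _ _).symm

lemma lap_sum {ι : Type*} (s : Finset ι) (F : ι → Spc → ℝ) (hF : ∀ l, Sm (F l)) :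
    lap (fun q => ∑ l ∈ s, F l q) = fun q => ∑ l ∈ s, lap (F l) q := by
  funext p
  simp only [lap_unfold]
  simp only [ps_sum s F hF]
  have : ∀ a : Fin 3, ps a (fun q => ∑ l ∈ s, ps a (F l) q) p = ∑ l ∈ s, ps a (ps a (F l)) p := by
    intro a
    have := congrFun (ps_sum s (fun l => ps a (F l)) (fun l => contDiff_ps (hF l) a) a) p
    simpa using this
  simp only [this]
  exact Finset.sum_comm

end BSSNaux

namespace BSSNaux

open MeasureTheory intervalIntegral

variable {f g : Spc → ℝ} {c : (Fin 3 → ℝ) → ℝ}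

/-- Integral form: `c(x) + ∫₀ᵗ f(s,x) ds`. -/
def IF (c : (Fin 3 → ℝ) → ℝ) (f : Spc → ℝ) : Spc → ℝ :=
  fun p => c p.2 + ∫ s in (0:ℝ)..p.1, f (s, p.2)

lemma contSlice (hf : Sm f) (x : Fin 3 → ℝ) : Continuous (fun s => f (s, x)) :=
  hf.continuous.comp (continuous_id.prodMk continuous_const)

lemma IF_pt (hf : Sm f) (p : Spc) : pt (IF c f) p = f p := by
  show deriv (fun t => c p.2 + ∫ s in (0:ℝ)..t, f (s, p.2)) p.1 = f p
  rw [deriv_const_add]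
  exact Continuous.deriv_integral _ (contSlice hf p.2) 0 p.1

/-- Differentiation under the integral sign in a spatial direction. -/
lemma key_under (hf : Sm f) (t : ℝ) (x : Fin 3 → ℝ) (i : Fin 3) :
    HasDerivAt (fun u => ∫ s in (0:ℝ)..t, f (s, Function.update x i u))
      (∫ s in (0:ℝ)..t, ps i f (s, x)) (x i) := by
  obtain ⟨C, hC⟩ : ∃ C, ∀ z ∈ (Set.uIcc (0:ℝ) t ×ˢ Metric.closedBall (x i) 1),
      ‖ps i f (z.1, Function.update x i z.2)‖ ≤ C := by
    apply (isCompact_uIcc.prod (isCompact_closedBall _ _)).exists_bound_of_continuousOn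
    apply Continuous.continuousOn
    exact (contDiff_ps hf i).continuous.comp
      (continuous_fst.prodMk (continuous_const.update i continuous_snd))
  have cont : ∀ u : ℝ, Continuous (fun s => f (s, Function.update x i u)) :=
    fun u => contSlice hf _
  have contd : ∀ u : ℝ, Continuous (fun s => ps i f (s, Function.update x i u)) :=
    fun u => contSlice (contDiff_ps hf i) _
  have main := intervalIntegral.hasDerivAt_integral_of_dominated_loc_of_deriv_le
      (F := fun u s => f (s, Function.update x i u))
      (F' := fun u s => ps i f (s, Function.update x i u))
      (x₀ := x i) (s := Metric.ball (x i) 1) (a := 0) (b := t) (μ := volume) (bound := fun _ => C)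
      (Metric.ball_mem_nhds _ one_pos)
      (Filter.Eventually.of_forall fun u => (cont u).aestronglyMeasurable)
      ((cont (x i)).intervalIntegrable 0 t)
      ((contd (x i)).aestronglyMeasurable)
      (Filter.Eventually.of_forall fun s hs u hu => by
        exact hC (s, u) ⟨Set.uIoc_subset_uIcc hs, Metric.ball_subset_closedBall hu⟩)
      (intervalIntegrable_const)
      (Filter.Eventually.of_forall fun s hs u hu => by
        have h := hasDerivAt_ps hf (s, Function.update x i u) i
        simpa [Function.update_idem] using h)
  have h2 := main.2
  simpa [Function.update_eq_self] using h2

lemma IF_ps (hc : Sm c) (hf : Sm f) (i : Fin 3) :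
    ps i (IF c f) = IF (d i c) (ps i f) := by
  funext p
  show deriv (fun u => c (Function.update p.2 i u)
      + ∫ s in (0:ℝ)..p.1, f (s, Function.update p.2 i u)) (p.2 i) = _
  exact ((hasDerivAt_d hc p.2 i).add (key_under hf p.1 p.2 i)).deriv

lemma IF_lap (hc : Sm c) (hf : Sm f) (p : Spc) :
    lap (IF c f) p = lapS c p.2 + ∫ s in (0:ℝ)..p.1, lap f (s, p.2) := by
  have h1 : ∀ a : Fin 3, ps a (ps a (IF c f)) p
      = d a (d a c) p.2 + ∫ s in (0:ℝ)..p.1, ps a (ps a f) (s, p.2) := by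
    intro a
    rw [IF_ps hc hf a, IF_ps (contDiff_d hc a) (contDiff_ps hf a) a]
    rfl
  rw [lap_unfold]
  simp only [h1]
  rw [Finset.sum_add_distrib]
  have : ∑ a : Fin 3, ∫ s in (0:ℝ)..p.1, ps a (ps a f) (s, p.2)
      = ∫ s in (0:ℝ)..p.1, ∑ a : Fin 3, ps a (ps a f) (s, p.2) := by
    rw [intervalIntegral.integral_finset_sum]
    intro a _
    exact (contSlice (contDiff_ps (contDiff_ps hf a) a) p.2).intervalIntegrable 0 p.1
  rw [this]
  rfl

/-- time-FTC for smooth functions. -/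
lemma FTC_time (hg : Sm g) (t : ℝ) (x : Fin 3 → ℝ) :
    ∫ s in (0:ℝ)..t, pt g (s, x) = g (t, x) - g (0, x) :=
  intervalIntegral.integral_eq_sub_of_hasDerivAt (f := fun u => g (u, x))
    (fun u _ => hasDerivAt_pt hg (u, x))
    ((contSlice (contDiff_pt hg) x).intervalIntegrable 0 t)

end BSSNaux

namespace BSSNaux

variable {κ : Spc → ℝ} {β : Fin 3 → Spc → ℝ} {A : Fin 3 → Fin 3 → Spc → ℝ}

lemma smLap {f : Spc → ℝ} (hf : Sm f) : Sm (lap f) :=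
  ContDiff.sum fun a _ => contDiff_ps (contDiff_ps hf a) a

/-- divergence of β -/
def Sβ (β : Fin 3 → Spc → ℝ) : Spc → ℝ := fun q => ∑ l, ps l (β l) q

def Fφ (κ : Spc → ℝ) (β : Fin 3 → Spc → ℝ) : Spc → ℝ :=
  fun q => -(1/6) * κ q + (1/6) * Sβ β q

def Fα (κ : Spc → ℝ) : Spc → ℝ := fun q => -κ q

def Fγ (A : Fin 3 → Fin 3 → Spc → ℝ) (β : Fin 3 → Spc → ℝ) (i j : Fin 3) : Spc → ℝ :=
  fun q => -2 * A i j q + ps i (β j) q + ps j (β i) q - (2/3) * kron i j * Sβ β q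

def FΓ (κ : Spc → ℝ) (β : Fin 3 → Spc → ℝ) (i : Fin 3) : Spc → ℝ :=
  fun q => -(4/3) * ps i κ q + (1/3) * ps i (Sβ β) q + lap (β i) q

section smooth

lemma smS (hβ : ∀ i, Sm (β i)) : Sm (Sβ β) :=
  ContDiff.sum fun l _ => contDiff_ps (hβ l) l

lemma smFφ (hκ : Sm κ) (hβ : ∀ i, Sm (β i)) : Sm (Fφ κ β) :=
  (contDiff_const.mul hκ).add (contDiff_const.mul (smS hβ))

lemma smFα (hκ : Sm κ) : Sm (Fα κ) := hκ.neg

lemma smFγ (hβ : ∀ i, Sm (β i)) (hA : ∀ i j, Sm (A i j)) (i j : Fin 3) : Sm (Fγ A β i j) :=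
  (((contDiff_const.mul (hA i j)).add (contDiff_ps (hβ j) i)).add
    (contDiff_ps (hβ i) j)).sub (contDiff_const.mul (smS hβ))

lemma smFΓ (hκ : Sm κ) (hβ : ∀ i, Sm (β i)) (i : Fin 3) : Sm (FΓ κ β i) :=
  ((contDiff_const.mul (contDiff_ps hκ i)).add
    (contDiff_const.mul (contDiff_ps (smS hβ) i))).add (smLap (hβ i))

-- Expansion lemmas
lemma expφ1 (hκ : Sm κ) (hβ : ∀ i, Sm (β i)) (k : Fin 3) : ps k (Fφ κ β) =
    fun r => -(1/6) * ps k κ r + (1/6) * ps k (Sβ β) r :=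
  funext fun q => (((hasDerivAt_ps hκ q k).const_mul (-(1/6))).add
    ((hasDerivAt_ps (smS hβ) q k).const_mul (1/6))).deriv

lemma expφ2 (hκ : Sm κ) (hβ : ∀ i, Sm (β i)) (k l : Fin 3) : ps k (ps l (Fφ κ β)) =
    fun r => -(1/6) * ps k (ps l κ) r + (1/6) * ps k (ps l (Sβ β)) r := by
  rw [expφ1 hκ hβ l]
  exact funext fun q => (((hasDerivAt_ps (contDiff_ps hκ l) q k).const_mul (-(1/6))).add
    ((hasDerivAt_ps (contDiff_ps (smS hβ) l) q k).const_mul (1/6))).deriv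

lemma lapFφ (hκ : Sm κ) (hβ : ∀ i, Sm (β i)) : lap (Fφ κ β) = fun r => -(1/6) * lap κ r + (1/6) * lap (Sβ β) r := by
  funext q
  simp only [lap_unfold]
  have h : ∀ k : Fin 3, ps k (ps k (Fφ κ β)) q
      = -(1/6) * ps k (ps k κ) q + (1/6) * ps k (ps k (Sβ β)) q :=
    fun k => congrFun (expφ2 hκ hβ k k) q
  simp only [h, Finset.sum_add_distrib, Finset.mul_sum]

lemma expα1 (k : Fin 3) (hκ : Sm κ) : ps k (Fα κ) = fun r => -ps k κ r :=
  funext fun q => ((hasDerivAt_ps hκ q k).neg).deriv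

lemma expα2 (k l : Fin 3) (hκ : Sm κ) : ps k (ps l (Fα κ)) = fun r => -ps k (ps l κ) r := by
  rw [expα1 l hκ]
  exact funext fun q => ((hasDerivAt_ps (contDiff_ps hκ l) q k).neg).deriv

lemma lapFα (hκ : Sm κ) : lap (Fα κ) = fun r => -lap κ r := by
  funext q
  simp only [lap_unfold]
  have h : ∀ k : Fin 3, ps k (ps k (Fα κ)) q = -ps k (ps k κ) q :=
    fun k => congrFun (expα2 k k hκ) q
  simp only [h, Finset.sum_neg_distrib]

lemma expγ1 (hβ : ∀ i, Sm (β i)) (hA : ∀ i j, Sm (A i j)) (i j k : Fin 3) : ps k (Fγ A β i j) =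
    fun r => -2 * ps k (A i j) r + ps k (ps i (β j)) r + ps k (ps j (β i)) r
      - (2/3) * kron i j * ps k (Sβ β) r :=
  funext fun q => (((((hasDerivAt_ps (hA i j) q k).const_mul (-2)).add
    (hasDerivAt_ps (contDiff_ps (hβ j) i) q k)).add
    (hasDerivAt_ps (contDiff_ps (hβ i) j) q k)).sub
    ((hasDerivAt_ps (smS hβ) q k).const_mul ((2/3) * kron i j))).deriv

lemma expγ2 (hβ : ∀ i, Sm (β i)) (hA : ∀ i j, Sm (A i j)) (i j k : Fin 3) : ps k (ps k (Fγ A β i j)) =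
    fun r => -2 * ps k (ps k (A i j)) r + ps k (ps k (ps i (β j))) r
      + ps k (ps k (ps j (β i))) r - (2/3) * kron i j * ps k (ps k (Sβ β)) r := by
  rw [expγ1 hβ hA i j k]
  exact funext fun q => (((((hasDerivAt_ps (contDiff_ps (hA i j) k) q k).const_mul (-2)).add
    (hasDerivAt_ps (contDiff_ps (contDiff_ps (hβ j) i) k) q k)).add
    (hasDerivAt_ps (contDiff_ps (contDiff_ps (hβ i) j) k) q k)).sub
    ((hasDerivAt_ps (contDiff_ps (smS hβ) k) q k).const_mul ((2/3) * kron i j))).deriv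

lemma lapFγ (hβ : ∀ i, Sm (β i)) (hA : ∀ i j, Sm (A i j)) (i j : Fin 3) : lap (Fγ A β i j) =
    fun r => -2 * lap (A i j) r + lap (ps i (β j)) r + lap (ps j (β i)) r
      - (2/3) * kron i j * lap (Sβ β) r := by
  funext q
  simp only [lap_unfold]
  have h : ∀ k : Fin 3, ps k (ps k (Fγ A β i j)) q
      = -2 * ps k (ps k (A i j)) q + ps k (ps k (ps i (β j))) q
        + ps k (ps k (ps j (β i))) q - (2/3) * kron i j * ps k (ps k (Sβ β)) q :=
    fun k => congrFun (expγ2 hβ hA i j k) q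
  simp only [h, Finset.sum_sub_distrib, Finset.sum_add_distrib, Finset.mul_sum]

lemma expΓ1 (hκ : Sm κ) (hβ : ∀ i, Sm (β i)) (a b : Fin 3) : ps a (FΓ κ β b) =
    fun r => -(4/3) * ps a (ps b κ) r + (1/3) * ps a (ps b (Sβ β)) r + ps a (lap (β b)) r :=
  funext fun q => ((((hasDerivAt_ps (contDiff_ps hκ b) q a).const_mul (-(4/3))).add
    ((hasDerivAt_ps (contDiff_ps (smS hβ) b) q a).const_mul (1/3))).add
    (hasDerivAt_ps (smLap (hβ b)) q a)).deriv

end smooth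
end BSSNaux

open BSSNaux MeasureTheory

/-- Given `β`, and `A`, `κ` solving the wave equations with initial time-derivatives
matching (E5), (E3) at `t = 0`, the fields `φ, α, γ̃, Γ` defined by time integration
satisfy the full linearized BSSN system (E1)–(E6). -/
theorem integrated_solution_satisfies_BSSN
    (β : Fin 3 → Spc → ℝ) (A : Fin 3 → Fin 3 → Spc → ℝ) (κ : Spc → ℝ)
    (hβ : ∀ i, ContDiff ℝ (⊤ : ℕ∞) (β i)) (hA : ∀ i j, ContDiff ℝ (⊤ : ℕ∞) (A i j))
    (hκ : ContDiff ℝ (⊤ : ℕ∞) κ)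
    (hAsym : ∀ i j, A i j = A j i)
    (waveA : ∀ i j p, pt (pt (A i j)) p = lap (A i j) p)
    (waveκ : ∀ p, pt (pt κ) p = lap κ p)
    (γ0 : Fin 3 → Fin 3 → (Fin 3 → ℝ) → ℝ) (Γ0 : Fin 3 → (Fin 3 → ℝ) → ℝ)
    (α0 φ0 : (Fin 3 → ℝ) → ℝ)
    (hγ0 : ∀ i j, ContDiff ℝ (⊤ : ℕ∞) (γ0 i j)) (hΓ0 : ∀ i, ContDiff ℝ (⊤ : ℕ∞) (Γ0 i))
    (hα0 : ContDiff ℝ (⊤ : ℕ∞) α0) (hφ0 : ContDiff ℝ (⊤ : ℕ∞) φ0)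
    (hγ0sym : ∀ i j, γ0 i j = γ0 j i)
    (hinitA : ∀ i j, ∀ x : Fin 3 → ℝ, pt (A i j) (0, x) =
      -(1/2) * lapS (γ0 i j) x + (1/2) * (d i (Γ0 j) x + d j (Γ0 i) x)
        - 2 * d i (d j φ0) x - 2 * kron i j * lapS φ0 x
        - d i (d j α0) x + (1/3) * kron i j * lapS α0 x)
    (hinitκ : ∀ x : Fin 3 → ℝ, pt κ (0, x) = -(lapS α0 x))
    (φ α : Spc → ℝ) (γ : Fin 3 → Fin 3 → Spc → ℝ) (Γ : Fin 3 → Spc → ℝ)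
    (hφ : ∀ t : ℝ, ∀ x : Fin 3 → ℝ, φ (t, x) = φ0 x +
      ∫ s in (0:ℝ)..t, (-(1/6) * κ (s, x) + (1/6) * ∑ i, ps i (β i) (s, x)))
    (hα : ∀ t : ℝ, ∀ x : Fin 3 → ℝ, α (t, x) = α0 x - ∫ s in (0:ℝ)..t, κ (s, x))
    (hγ : ∀ i j, ∀ t : ℝ, ∀ x : Fin 3 → ℝ, γ i j (t, x) = γ0 i j x +
      ∫ s in (0:ℝ)..t, (-2 * A i j (s, x) + ps i (β j) (s, x) + ps j (β i) (s, x)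
        - (2/3) * kron i j * ∑ a, ps a (β a) (s, x)))
    (hΓ : ∀ i, ∀ t : ℝ, ∀ x : Fin 3 → ℝ, Γ i (t, x) = Γ0 i x +
      ∫ s in (0:ℝ)..t, (-(4/3) * ps i κ (s, x)
        + (1/3) * ps i (fun q => ∑ a, ps a (β a) q) (s, x) + lap (β i) (s, x))) :
    (∀ p, pt φ p = -(1/6) * κ p + (1/6) * ∑ l, ps l (β l) p) ∧
    (∀ p, pt α p = -κ p) ∧
    (∀ p, pt κ p = -(lap α p)) ∧
    (∀ i j p, pt (γ i j) p =
      -2 * A i j p + ps i (β j) p + ps j (β i) p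
        - (2/3) * kron i j * ∑ l, ps l (β l) p) ∧
    (∀ i j p, pt (A i j) p =
      -(1/2) * lap (γ i j) p + (1/2) * (ps i (Γ j) p + ps j (Γ i) p)
        - 2 * ps i (ps j φ) p - 2 * kron i j * lap φ p
        - ps i (ps j α) p + (1/3) * kron i j * lap α p) ∧
    (∀ i p, pt (Γ i) p =
      -(4/3) * ps i κ p + (1/3) * ps i (fun q => ∑ l, ps l (β l) q) p
        + lap (β i) p) := by

  have hS : Sm (Sβ β) := smS hβ
  have hfφ : Sm (Fφ κ β) := smFφ hκ hβ
  have hfα : Sm (Fα κ) := smFα hκ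
  have hfγ : ∀ i j, Sm (Fγ A β i j) := smFγ hβ hA
  have hfΓ : ∀ i, Sm (FΓ κ β i) := smFΓ hκ hβ
  have hφF : φ = IF φ0 (Fφ κ β) := funext fun p => hφ p.1 p.2
  have hαF : α = IF α0 (Fα κ) := by
    funext p
    have h := hα p.1 p.2
    show α p = α0 p.2 + ∫ s in (0:ℝ)..p.1, Fα κ (s, p.2)
    have h2 : (∫ s in (0:ℝ)..p.1, Fα κ (s, p.2)) = -∫ s in (0:ℝ)..p.1, κ (s, p.2) :=
      intervalIntegral.integral_neg
    rw [h2, h]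
    ring
  have hγF : ∀ i j, γ i j = IF (γ0 i j) (Fγ A β i j) :=
    fun i j => funext fun p => hγ i j p.1 p.2
  have hΓF : ∀ i, Γ i = IF (Γ0 i) (FΓ κ β i) :=
    fun i => funext fun p => hΓ i p.1 p.2
  refine ⟨?_, ?_, ?_, ?_, ?_, ?_⟩
  · -- E1
    intro p
    rw [hφF]
    exact IF_pt hfφ p
  · -- E2
    intro p
    rw [hαF]
    exact IF_pt hfα p
  · -- E3
    rintro ⟨t, x⟩
    have h2 : lap α (t, x) = lapS α0 x + ∫ s in (0:ℝ)..t, lap (Fα κ) (s, x) := by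
      rw [hαF]; exact IF_lap hα0 hfα (t, x)
    have h3 : (∫ s in (0:ℝ)..t, lap (Fα κ) (s, x)) = -∫ s in (0:ℝ)..t, lap κ (s, x) := by
      have : (∫ s in (0:ℝ)..t, lap (Fα κ) (s, x)) = ∫ s in (0:ℝ)..t, -lap κ (s, x) :=
        intervalIntegral.integral_congr fun s _ => congrFun (lapFα hκ) (s, x)
      rw [this, intervalIntegral.integral_neg]
    have h1 : (∫ s in (0:ℝ)..t, lap κ (s, x)) = pt κ (t, x) - pt κ (0, x) := by
      rw [← FTC_time (contDiff_pt hκ) t x]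
      exact intervalIntegral.integral_congr fun s _ => (waveκ (s, x)).symm
    rw [h2, h3, h1, hinitκ x]
    ring
  · -- E4
    intro i j p
    rw [hγF i j]
    exact IF_pt (hfγ i j) p
  · -- E5
    rintro i j ⟨t, x⟩
    have hL : pt (A i j) (t, x) = pt (A i j) (0, x) + ∫ s in (0:ℝ)..t, lap (A i j) (s, x) := by
      have h1 := FTC_time (contDiff_pt (hA i j)) t x
      have h2 : (∫ s in (0:ℝ)..t, lap (A i j) (s, x))
          = ∫ s in (0:ℝ)..t, pt (pt (A i j)) (s, x) :=
        intervalIntegral.integral_congr fun s _ => (waveA i j (s, x)).symm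
      rw [h2, h1]
      ring
    have hlapγ : lap (γ i j) (t, x)
        = lapS (γ0 i j) x + ∫ s in (0:ℝ)..t, lap (Fγ A β i j) (s, x) := by
      rw [hγF i j]; exact IF_lap (hγ0 i j) (hfγ i j) (t, x)
    have hpsΓ : ∀ a b : Fin 3, ps a (Γ b) (t, x)
        = d a (Γ0 b) x + ∫ s in (0:ℝ)..t, ps a (FΓ κ β b) (s, x) := by
      intro a b
      rw [hΓF b, IF_ps (hΓ0 b) (hfΓ b) a]
      rfl
    have hps2φ : ps i (ps j φ) (t, x)
        = d i (d j φ0) x + ∫ s in (0:ℝ)..t, ps i (ps j (Fφ κ β)) (s, x) := by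
      rw [hφF, IF_ps hφ0 hfφ j, IF_ps (contDiff_d hφ0 j) (contDiff_ps hfφ j) i]
      rfl
    have hlapφ : lap φ (t, x) = lapS φ0 x + ∫ s in (0:ℝ)..t, lap (Fφ κ β) (s, x) := by
      rw [hφF]; exact IF_lap hφ0 hfφ (t, x)
    have hps2α : ps i (ps j α) (t, x)
        = d i (d j α0) x + ∫ s in (0:ℝ)..t, ps i (ps j (Fα κ)) (s, x) := by
      rw [hαF, IF_ps hα0 hfα j, IF_ps (contDiff_d hα0 j) (contDiff_ps hfα j) i]
      rfl
    have hlapα : lap α (t, x) = lapS α0 x + ∫ s in (0:ℝ)..t, lap (Fα κ) (s, x) := by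
      rw [hαF]; exact IF_lap hα0 hfα (t, x)
    -- pointwise integrand identity
    have hint : ∀ q : Spc, lap (A i j) q =
        -(1/2) * lap (Fγ A β i j) q + (1/2) * (ps i (FΓ κ β j) q + ps j (FΓ κ β i) q)
          - 2 * ps i (ps j (Fφ κ β)) q - 2 * kron i j * lap (Fφ κ β) q
          - ps i (ps j (Fα κ)) q + (1/3) * kron i j * lap (Fα κ) q := by
      intro q
      rw [congrFun (lapFγ hβ hA i j) q, congrFun (expΓ1 hκ hβ i j) q,
        congrFun (expΓ1 hκ hβ j i) q, congrFun (expφ2 hκ hβ i j) q,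
        congrFun (lapFφ hκ hβ) q, congrFun (expα2 i j hκ) q, congrFun (lapFα hκ) q,
        ps_comm hκ j i q, ps_comm hS j i q,
        ps_lap_comm (hβ j) i q, ps_lap_comm (hβ i) j q]
      ring
    have cc : ∀ (h : Spc → ℝ), Sm h → IntervalIntegrable (fun s => h (s, x)) volume 0 t :=
      fun h hh => (contSlice hh x).intervalIntegrable 0 t
    have j1 := (cc _ (smLap (hfγ i j))).const_mul (-(1/2))
    have j2 := ((cc _ (contDiff_ps (hfΓ j) i)).add (cc _ (contDiff_ps (hfΓ i) j))).const_mul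
      ((1:ℝ)/2)
    have j3 := (cc _ (contDiff_ps (contDiff_ps hfφ j) i)).const_mul (2:ℝ)
    have j4 := (cc _ (smLap hfφ)).const_mul (2 * kron i j)
    have j5 := cc _ (contDiff_ps (contDiff_ps hfα j) i)
    have j6 := (cc _ (smLap hfα)).const_mul (1/3 * kron i j)
    have hI : (∫ s in (0:ℝ)..t, lap (A i j) (s, x)) =
        -(1/2) * (∫ s in (0:ℝ)..t, lap (Fγ A β i j) (s, x))
          + (1/2) * ((∫ s in (0:ℝ)..t, ps i (FΓ κ β j) (s, x))
              + ∫ s in (0:ℝ)..t, ps j (FΓ κ β i) (s, x))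
          - 2 * (∫ s in (0:ℝ)..t, ps i (ps j (Fφ κ β)) (s, x))
          - 2 * kron i j * (∫ s in (0:ℝ)..t, lap (Fφ κ β) (s, x))
          - (∫ s in (0:ℝ)..t, ps i (ps j (Fα κ)) (s, x))
          + 1/3 * kron i j * (∫ s in (0:ℝ)..t, lap (Fα κ) (s, x)) := by
      rw [show (∫ s in (0:ℝ)..t, lap (A i j) (s, x)) = ∫ s in (0:ℝ)..t,
          (-(1/2) * lap (Fγ A β i j) (s, x)
            + (1/2) * (ps i (FΓ κ β j) (s, x) + ps j (FΓ κ β i) (s, x))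
            - 2 * ps i (ps j (Fφ κ β)) (s, x) - 2 * kron i j * lap (Fφ κ β) (s, x)
            - ps i (ps j (Fα κ)) (s, x) + 1/3 * kron i j * lap (Fα κ) (s, x))
        from intervalIntegral.integral_congr fun s _ => hint (s, x)]
      have s6 : (∫ s in (0:ℝ)..t,
          (-(1/2) * lap (Fγ A β i j) (s, x)
            + (1/2) * (ps i (FΓ κ β j) (s, x) + ps j (FΓ κ β i) (s, x))
            - 2 * ps i (ps j (Fφ κ β)) (s, x) - 2 * kron i j * lap (Fφ κ β) (s, x)
            - ps i (ps j (Fα κ)) (s, x) + 1/3 * kron i j * lap (Fα κ) (s, x)))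
          = (∫ s in (0:ℝ)..t,
          (-(1/2) * lap (Fγ A β i j) (s, x)
            + (1/2) * (ps i (FΓ κ β j) (s, x) + ps j (FΓ κ β i) (s, x))
            - 2 * ps i (ps j (Fφ κ β)) (s, x) - 2 * kron i j * lap (Fφ κ β) (s, x)
            - ps i (ps j (Fα κ)) (s, x)))
            + ∫ s in (0:ℝ)..t, 1/3 * kron i j * lap (Fα κ) (s, x) :=
        intervalIntegral.integral_add ((((j1.add j2).sub j3).sub j4).sub j5) j6
      have s5 : (∫ s in (0:ℝ)..t,
          (-(1/2) * lap (Fγ A β i j) (s, x)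
            + (1/2) * (ps i (FΓ κ β j) (s, x) + ps j (FΓ κ β i) (s, x))
            - 2 * ps i (ps j (Fφ κ β)) (s, x) - 2 * kron i j * lap (Fφ κ β) (s, x)
            - ps i (ps j (Fα κ)) (s, x)))
          = (∫ s in (0:ℝ)..t,
          (-(1/2) * lap (Fγ A β i j) (s, x)
            + (1/2) * (ps i (FΓ κ β j) (s, x) + ps j (FΓ κ β i) (s, x))
            - 2 * ps i (ps j (Fφ κ β)) (s, x) - 2 * kron i j * lap (Fφ κ β) (s, x)))
            - ∫ s in (0:ℝ)..t, ps i (ps j (Fα κ)) (s, x) :=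
        intervalIntegral.integral_sub (((j1.add j2).sub j3).sub j4) j5
      have s4 : (∫ s in (0:ℝ)..t,
          (-(1/2) * lap (Fγ A β i j) (s, x)
            + (1/2) * (ps i (FΓ κ β j) (s, x) + ps j (FΓ κ β i) (s, x))
            - 2 * ps i (ps j (Fφ κ β)) (s, x) - 2 * kron i j * lap (Fφ κ β) (s, x)))
          = (∫ s in (0:ℝ)..t,
          (-(1/2) * lap (Fγ A β i j) (s, x)
            + (1/2) * (ps i (FΓ κ β j) (s, x) + ps j (FΓ κ β i) (s, x))
            - 2 * ps i (ps j (Fφ κ β)) (s, x)))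
            - ∫ s in (0:ℝ)..t, 2 * kron i j * lap (Fφ κ β) (s, x) :=
        intervalIntegral.integral_sub ((j1.add j2).sub j3) j4
      have s3 : (∫ s in (0:ℝ)..t,
          (-(1/2) * lap (Fγ A β i j) (s, x)
            + (1/2) * (ps i (FΓ κ β j) (s, x) + ps j (FΓ κ β i) (s, x))
            - 2 * ps i (ps j (Fφ κ β)) (s, x)))
          = (∫ s in (0:ℝ)..t,
          (-(1/2) * lap (Fγ A β i j) (s, x)
            + (1/2) * (ps i (FΓ κ β j) (s, x) + ps j (FΓ κ β i) (s, x))))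
            - ∫ s in (0:ℝ)..t, 2 * ps i (ps j (Fφ κ β)) (s, x) :=
        intervalIntegral.integral_sub (j1.add j2) j3
      have s2 : (∫ s in (0:ℝ)..t,
          (-(1/2) * lap (Fγ A β i j) (s, x)
            + (1/2) * (ps i (FΓ κ β j) (s, x) + ps j (FΓ κ β i) (s, x))))
          = (∫ s in (0:ℝ)..t, -(1/2) * lap (Fγ A β i j) (s, x))
            + ∫ s in (0:ℝ)..t, (1/2) * (ps i (FΓ κ β j) (s, x) + ps j (FΓ κ β i) (s, x)) :=
        intervalIntegral.integral_add j1 j2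
      have c1 : (∫ s in (0:ℝ)..t, -(1/2) * lap (Fγ A β i j) (s, x))
          = -(1/2) * ∫ s in (0:ℝ)..t, lap (Fγ A β i j) (s, x) :=
        intervalIntegral.integral_const_mul _ _
      have c2 : (∫ s in (0:ℝ)..t, (1/2) * (ps i (FΓ κ β j) (s, x) + ps j (FΓ κ β i) (s, x)))
          = (1/2) * ∫ s in (0:ℝ)..t, (ps i (FΓ κ β j) (s, x) + ps j (FΓ κ β i) (s, x)) :=
        intervalIntegral.integral_const_mul _ _
      have c2' : (∫ s in (0:ℝ)..t, (ps i (FΓ κ β j) (s, x) + ps j (FΓ κ β i) (s, x)))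
          = (∫ s in (0:ℝ)..t, ps i (FΓ κ β j) (s, x))
            + ∫ s in (0:ℝ)..t, ps j (FΓ κ β i) (s, x) :=
        intervalIntegral.integral_add (cc _ (contDiff_ps (hfΓ j) i)) (cc _ (contDiff_ps (hfΓ i) j))
      have c3 : (∫ s in (0:ℝ)..t, 2 * ps i (ps j (Fφ κ β)) (s, x))
          = 2 * ∫ s in (0:ℝ)..t, ps i (ps j (Fφ κ β)) (s, x) :=
        intervalIntegral.integral_const_mul _ _
      have c4 : (∫ s in (0:ℝ)..t, 2 * kron i j * lap (Fφ κ β) (s, x))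
          = 2 * kron i j * ∫ s in (0:ℝ)..t, lap (Fφ κ β) (s, x) :=
        intervalIntegral.integral_const_mul _ _
      have c6 : (∫ s in (0:ℝ)..t, 1/3 * kron i j * lap (Fα κ) (s, x))
          = 1/3 * kron i j * ∫ s in (0:ℝ)..t, lap (Fα κ) (s, x) :=
        intervalIntegral.integral_const_mul _ _
      rw [s6, s5, s4, s3, s2, c1, c2, c2', c3, c4, c6]
    rw [hL, hinitA i j x, hlapγ, hpsΓ i j, hpsΓ j i, hps2φ, hlapφ, hps2α, hlapα]
    linear_combination hI
  · -- E6
    intro i p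
    rw [hΓF i]
    exact IF_pt (hfΓ i) p
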